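/- Let X be a complex Banach space, B its open unit ball, e ∈ ∂B, e* a support functional at e, and f(x) = x + P₂(x) + P₃(x) + ⋯ holomorphic near 0 with homogeneous polynomial terms P_k. Define the Fekete–Szegő mapping Ψ_e(f, λ, μ) = P₃(e) − (μ/2) D²f(0)[e, P₂(e)] − (λ−μ)⟨P₂(e), e*⟩ P₂(e). If P₂ is of one-dimensional type, i.e. P₂(x) = s(x)·x for a homogeneous degree-2 scalar polynomial s, then Ψ_e(f, λ, μ) = P₃(e) − λ⟨P₂(e), e*⟩ P₂(e); in particular Ψ_e(f, λ, μ) does not depend on μ. -/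

import Mathlib

variable {X : Type*} [NormedAddCommGroup X] [NormedSpace ℂ X]

/-- The `k`-th homogeneous term `P_k(x) = (1/k!) Dᵏf(0)[xᵏ]` of a mapping `f` at the origin. -/
noncomputable def homTerm (f : X → X) (k : ℕ) (x : X) : X :=
  (k.factorial : ℂ)⁻¹ • iteratedFDeriv ℂ k f 0 (fun _ => x)

/-- The second Fréchet derivative at the origin, `D²f(0)[x,y]`. -/
noncomputable def D2 (f : X → X) (x y : X) : X :=
  iteratedFDeriv ℂ 2 f 0 ![x, y]

/-- The Fekete–Szegő mapping
`Ψ_e(f,λ,μ) = P₃(e) - (μ/2)D²f(0)[e,P₂(e)] - (λ-μ)⟨P₂(e),e*⟩P₂(e)`. -/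
noncomputable def FS (f : X → X) (e : X) (estar : X →L[ℂ] ℂ) (lam mu : ℂ) : X :=
  homTerm f 3 e - (mu / 2) • D2 f e (homTerm f 2 e)
    - ((lam - mu) * estar (homTerm f 2 e)) • homTerm f 2 e

/-- If `P₂` is of one-dimensional type, the Fekete–Szegő mapping does not depend on `μ`. -/
theorem FS_one_dim_P2 (f : X → X) (hf : AnalyticAt ℂ f 0) (hf0 : f 0 = 0)
    (hf1 : fderiv ℂ f 0 = ContinuousLinearMap.id ℂ X)
    (e : X) (he : ‖e‖ = 1) (estar : X →L[ℂ] ℂ) (hes : ‖estar‖ = 1) (hee : estar e = 1)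
    (s : X → ℂ) (hshom : ∀ (c : ℂ) (x : X), s (c • x) = c ^ 2 * s x)
    (hP2 : ∀ x, homTerm f 2 x = s x • x) (lam mu : ℂ) :
    FS f e estar lam mu =
      homTerm f 3 e - (lam * estar (homTerm f 2 e)) • homTerm f 2 e := by
  set M := iteratedFDeriv ℂ 2 f 0
  have hvec : (fun _ : Fin 2 => e) = ![e, e] := by
    funext i; fin_cases i <;> rfl
  have hMe : M ![e, e] = (2 : ℂ) • (s e • e) := by
    have h := hP2 e
    rw [homTerm, hvec] at h
    have h2 : (Nat.factorial 2 : ℂ) = 2 := by norm_num [Nat.factorial]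
    rw [h2] at h
    rw [← h, smul_smul]
    norm_num
    rfl
  have hupd : ∀ y : X, ![e, y] = Function.update ![e, e] 1 y := by
    intro y; funext i; fin_cases i <;> rfl
  have hD2 : D2 f e (homTerm f 2 e) = (2 * s e * s e) • e := by
    rw [hP2, D2, hupd (s e • e), ContinuousMultilinearMap.map_update_smul, ← hupd e, hMe]
    rw [smul_smul, smul_smul]; ring_nf
  have hes2 : estar (homTerm f 2 e) = s e := by
    rw [hP2, map_smul, hee, smul_eq_mul, mul_one]
  rw [FS, hD2, hes2, hP2]
  rw [smul_smul, smul_smul, smul_smul]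
  rw [sub_sub, ← add_smul]
  congr 2
  ring
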